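/- arXiv:2412.16684 — 2 statements merged into one kernel-verified Lean document; each statement's English description precedes it below -/
import Mathlib

section
/- Under the same setup (two symmetric zero-diagonal N×N matrices W, W', N = m+n, uniform random permutation), with U_x the within-X sum of W and U'_y the within-Y sum of W', one has Cov(U_x, U'_y) = C(m−1)(n−1)(W̃_2 − 2W̃_3), where C = 2mn/(N(N−1)(N−2)(N−3)), W̃_2 = Σ_{i,j} W_{ij}W'_{ij} − W_1 W'_1/(N(N−1)), and W̃_3 = Σ_{i,j,r} W_{ij}W'_{ir} − W_1 W'_1/N. -/
open Finset

/-- Expectation under the uniform distribution on permutations of `Fin N`. -/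
noncomputable def pE {N : ℕ} (f : Equiv.Perm (Fin N) → ℝ) : ℝ :=
  (∑ π : Equiv.Perm (Fin N), f π) / (Fintype.card (Equiv.Perm (Fin N)) : ℝ)

/-- Covariance under the uniform distribution on permutations of `Fin N`. -/
noncomputable def pCov {N : ℕ} (f g : Equiv.Perm (Fin N) → ℝ) : ℝ :=
  pE (fun π => (f π - pE f) * (g π - pE g))

/-- Within-first-group sum: sums `W i j` over pairs both assigned to the first `m` labels. -/
noncomputable def Ux {N : ℕ} (W : Matrix (Fin N) (Fin N) ℝ) (m : ℕ)
    (π : Equiv.Perm (Fin N)) : ℝ :=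
  ∑ i, ∑ j, if (π i : ℕ) < m ∧ (π j : ℕ) < m then W i j else 0

/-- Within-second-group sum: sums `W i j` over pairs both assigned to labels `> m`. -/
noncomputable def Uy {N : ℕ} (W : Matrix (Fin N) (Fin N) ℝ) (m : ℕ)
    (π : Equiv.Perm (Fin N)) : ℝ :=
  ∑ i, ∑ j, if m ≤ (π i : ℕ) ∧ m ≤ (π j : ℕ) then W i j else 0

lemma exists_perm_maps {N k : ℕ} {t s : Fin k → Fin N}
    (ht : Function.Injective t) (hs : Function.Injective s) :
    ∃ σ : Equiv.Perm (Fin N), ∀ a, σ (t a) = s a := by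
  classical
  let e : {x // x ∈ Set.range t} ≃ {x // x ∈ Set.range s} :=
    (Equiv.ofInjective t ht).symm.trans (Equiv.ofInjective s hs)
  refine ⟨e.extendSubtype, fun a => ?_⟩
  rw [Equiv.extendSubtype_apply_of_mem e (t a) ⟨a, rfl⟩]
  haveI : Nonempty (Fin k) := ⟨a⟩
  simp [e, Equiv.ofInjective]
  rw [Function.leftInverse_invFun ht a]

lemma cnt_const {N k : ℕ} (C : (Fin k → ℕ) → Prop) [DecidablePred C]
    {t s : Fin k → Fin N} (ht : Function.Injective t) (hs : Function.Injective s) :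
    (univ.filter fun π : Equiv.Perm (Fin N) => C fun a => ((π (t a) : Fin N) : ℕ)).card
    = (univ.filter fun π : Equiv.Perm (Fin N) => C fun a => ((π (s a) : Fin N) : ℕ)).card := by
  obtain ⟨σ, hσ⟩ := exists_perm_maps ht hs
  apply Finset.card_bij' (fun π _ => π * σ⁻¹) (fun π _ => π * σ)
  · intro π hπ; simp only [mem_filter, mem_univ, true_and] at hπ ⊢
    convert hπ using 2 with a
    simp [← hσ a]
  · intro π hπ; simp only [mem_filter, mem_univ, true_and] at hπ ⊢
    convert hπ using 2 with a
    simp [← hσ a]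
  · intro π _; simp [mul_assoc]
  · intro π _; simp [mul_assoc]

lemma card_lt_filter {N m : ℕ} (h : m ≤ N) :
    (univ.filter fun a : Fin N => (a : ℕ) < m).card = m := by
  rw [show (univ.filter fun a : Fin N => (a : ℕ) < m)
      = Finset.map (Fin.castLEEmb h) univ by
    ext x
    simp only [mem_filter, mem_univ, true_and, Finset.mem_map, Fin.castLEEmb]
    constructor
    · intro hx; exact ⟨⟨x, hx⟩, by simp [Fin.castLE]⟩
    · rintro ⟨y, rfl⟩; simpa using y.2]
  simp

lemma card_perm_lt {N m : ℕ} (h : m ≤ N) (π : Equiv.Perm (Fin N)) :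
    (univ.filter fun i : Fin N => ((π i : Fin N) : ℕ) < m).card = m := by
  have key : (univ.filter fun i : Fin N => ((π i : Fin N) : ℕ) < m).card
      = (univ.filter fun a : Fin N => (a : ℕ) < m).card := by
    apply Finset.card_bij (fun i _ => π i)
    · intro i hi; simp only [mem_filter, mem_univ, true_and] at hi ⊢; exact hi
    · intro a _ b _ hab; exact π.injective hab
    · intro b hb; exact ⟨π.symm b, by simpa using hb, by simp⟩
  rw [key, card_lt_filter h]

lemma card_perm_ge {N m : ℕ} (h : m ≤ N) (π : Equiv.Perm (Fin N)) :
    (univ.filter fun i : Fin N => m ≤ ((π i : Fin N) : ℕ)).card = N - m := by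
  have := card_perm_lt h π
  have h2 : (univ.filter fun i : Fin N => m ≤ ((π i : Fin N) : ℕ))
      = univ \ (univ.filter fun i : Fin N => ((π i : Fin N) : ℕ) < m) := by
    ext x; simp [not_lt]
  rw [h2, Finset.card_sdiff_of_subset (Finset.filter_subset _ _), this, Finset.card_univ,
    Fintype.card_fin]

lemma inj2 {α : Type*} {i j : α} (h : i ≠ j) : Function.Injective ![i, j] := by
  intro a b hab
  fin_cases a <;> fin_cases b <;> simp_all

lemma inj4 {α : Type*} {i j k l : α} (h1 : i ≠ j) (h2 : i ≠ k) (h3 : i ≠ l)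
    (h4 : j ≠ k) (h5 : j ≠ l) (h6 : k ≠ l) : Function.Injective ![i, j, k, l] := by
  intro a b hab
  fin_cases a <;> fin_cases b <;> simp_all

lemma swap_count {α β : Type*} [Fintype β] [DecidableEq α] (s : Finset α)
    (P : β → α → Prop) [∀ b a, Decidable (P b a)] :
    ∑ x ∈ s, (univ.filter fun b : β => P b x).card
    = ∑ b : β, (s.filter fun x => P b x).card := by
  simp only [Finset.card_filter]
  exact Finset.sum_comm

-- per-π pair count
lemma perm_pair_lt {N m : ℕ} (h : m ≤ N) (π : Equiv.Perm (Fin N)) :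
    ((univ : Finset (Fin N)).offDiag.filter
      fun p => ((π p.1 : ℕ) < m ∧ (π p.2 : ℕ) < m)).card = m * m - m := by
  have he : ((univ : Finset (Fin N)).offDiag.filter
      fun p => ((π p.1 : ℕ) < m ∧ (π p.2 : ℕ) < m))
      = (univ.filter fun i : Fin N => (π i : ℕ) < m).offDiag := by
    ext p
    simp only [mem_filter, Finset.mem_offDiag, mem_univ, true_and]
    tauto
  rw [he, Finset.offDiag_card, card_perm_lt h π]

lemma perm_pair_ge {N m : ℕ} (h : m ≤ N) (π : Equiv.Perm (Fin N)) :
    ((univ : Finset (Fin N)).offDiag.filter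
      fun p => (m ≤ (π p.1 : ℕ) ∧ m ≤ (π p.2 : ℕ))).card = (N - m) * (N - m) - (N - m) := by
  have he : ((univ : Finset (Fin N)).offDiag.filter
      fun p => (m ≤ (π p.1 : ℕ) ∧ m ≤ (π p.2 : ℕ)))
      = (univ.filter fun i : Fin N => m ≤ (π i : ℕ)).offDiag := by
    ext p
    simp only [mem_filter, Finset.mem_offDiag, mem_univ, true_and]
    tauto
  rw [he, Finset.offDiag_card, card_perm_ge h π]

lemma pair_count_lt {N m : ℕ} (h : m ≤ N) {i j : Fin N} (hij : i ≠ j) :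
    (N * N - N) * (univ.filter fun π : Equiv.Perm (Fin N) =>
        ((π i : ℕ) < m ∧ (π j : ℕ) < m)).card
    = (m * m - m) * Fintype.card (Equiv.Perm (Fin N)) := by
  have hconst : ∀ p ∈ (univ : Finset (Fin N)).offDiag,
      (univ.filter fun π : Equiv.Perm (Fin N) =>
        ((π p.1 : ℕ) < m ∧ (π p.2 : ℕ) < m)).card
      = (univ.filter fun π : Equiv.Perm (Fin N) =>
        ((π i : ℕ) < m ∧ (π j : ℕ) < m)).card := by
    intro p hp
    rw [Finset.mem_offDiag] at hp
    simpa using cnt_const (fun v : Fin 2 → ℕ => v 0 < m ∧ v 1 < m)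
      (inj2 hp.2.2) (inj2 hij)
  have h1 : ∑ p ∈ (univ : Finset (Fin N)).offDiag,
      (univ.filter fun π : Equiv.Perm (Fin N) =>
        ((π p.1 : ℕ) < m ∧ (π p.2 : ℕ) < m)).card
      = (N * N - N) * (univ.filter fun π : Equiv.Perm (Fin N) =>
        ((π i : ℕ) < m ∧ (π j : ℕ) < m)).card := by
    rw [Finset.sum_congr rfl hconst, Finset.sum_const, smul_eq_mul,
      Finset.offDiag_card, Finset.card_univ, Fintype.card_fin]
  rw [← h1, swap_count]
  rw [Finset.sum_congr rfl (fun π _ => perm_pair_lt h π), Finset.sum_const, smul_eq_mul,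
    Finset.card_univ, mul_comm]

lemma pair_count_ge {N m : ℕ} (h : m ≤ N) {i j : Fin N} (hij : i ≠ j) :
    (N * N - N) * (univ.filter fun π : Equiv.Perm (Fin N) =>
        (m ≤ (π i : ℕ) ∧ m ≤ (π j : ℕ))).card
    = ((N - m) * (N - m) - (N - m)) * Fintype.card (Equiv.Perm (Fin N)) := by
  have hconst : ∀ p ∈ (univ : Finset (Fin N)).offDiag,
      (univ.filter fun π : Equiv.Perm (Fin N) =>
        (m ≤ (π p.1 : ℕ) ∧ m ≤ (π p.2 : ℕ))).card
      = (univ.filter fun π : Equiv.Perm (Fin N) =>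
        (m ≤ (π i : ℕ) ∧ m ≤ (π j : ℕ))).card := by
    intro p hp
    rw [Finset.mem_offDiag] at hp
    simpa using cnt_const (fun v : Fin 2 → ℕ => m ≤ v 0 ∧ m ≤ v 1)
      (inj2 hp.2.2) (inj2 hij)
  have h1 : ∑ p ∈ (univ : Finset (Fin N)).offDiag,
      (univ.filter fun π : Equiv.Perm (Fin N) =>
        (m ≤ (π p.1 : ℕ) ∧ m ≤ (π p.2 : ℕ))).card
      = (N * N - N) * (univ.filter fun π : Equiv.Perm (Fin N) =>
        (m ≤ (π i : ℕ) ∧ m ≤ (π j : ℕ))).card := by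
    rw [Finset.sum_congr rfl hconst, Finset.sum_const, smul_eq_mul,
      Finset.offDiag_card, Finset.card_univ, Fintype.card_fin]
  rw [← h1, swap_count]
  rw [Finset.sum_congr rfl (fun π _ => perm_pair_ge h π), Finset.sum_const, smul_eq_mul,
    Finset.card_univ, mul_comm]

lemma perm_quad {N m : ℕ} (h : m ≤ N) (π : Equiv.Perm (Fin N)) :
    (((univ : Finset (Fin N)).offDiag ×ˢ (univ : Finset (Fin N)).offDiag).filter
      fun pq => ((π pq.1.1 : ℕ) < m ∧ (π pq.1.2 : ℕ) < m)
        ∧ (m ≤ (π pq.2.1 : ℕ) ∧ m ≤ (π pq.2.2 : ℕ))).card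
    = (m * m - m) * ((N - m) * (N - m) - (N - m)) := by
  rw [Finset.filter_product (fun y : Fin N × Fin N => (π y.1 : ℕ) < m ∧ (π y.2 : ℕ) < m)
    (fun y : Fin N × Fin N => m ≤ (π y.1 : ℕ) ∧ m ≤ (π y.2 : ℕ)),
    Finset.card_product, perm_pair_lt h π, perm_pair_ge h π]

lemma quad_zero {N m : ℕ} {i j k l : Fin N} (hov : i = k ∨ i = l ∨ j = k ∨ j = l) :
    (univ.filter fun π : Equiv.Perm (Fin N) =>
      (((π i : ℕ) < m ∧ (π j : ℕ) < m) ∧ (m ≤ (π k : ℕ) ∧ m ≤ (π l : ℕ)))).card = 0 := by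
  rw [Finset.card_eq_zero, Finset.filter_eq_empty_iff]
  intro π _
  rintro ⟨⟨h1, h2⟩, h3, h4⟩
  rcases hov with rfl | rfl | rfl | rfl <;> omega

lemma Dcard_eq {N : ℕ} :
    (((univ : Finset (Fin N)).offDiag ×ˢ (univ : Finset (Fin N)).offDiag).filter
      fun pq => pq.1.1 ≠ pq.2.1 ∧ pq.1.1 ≠ pq.2.2 ∧ pq.1.2 ≠ pq.2.1 ∧ pq.1.2 ≠ pq.2.2).card
    = (N * N - N) * ((N - 2) * (N - 2) - (N - 2)) := by
  classical
  rw [Finset.card_filter, Finset.sum_product]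
  have hin : ∀ p ∈ (univ : Finset (Fin N)).offDiag,
      (∑ q ∈ (univ : Finset (Fin N)).offDiag,
        if p.1 ≠ q.1 ∧ p.1 ≠ q.2 ∧ p.2 ≠ q.1 ∧ p.2 ≠ q.2 then 1 else 0)
      = (N - 2) * (N - 2) - (N - 2) := by
    intro p hp
    rw [Finset.mem_offDiag] at hp
    rw [← Finset.card_filter]
    have he : ((univ : Finset (Fin N)).offDiag.filter
        fun q => p.1 ≠ q.1 ∧ p.1 ≠ q.2 ∧ p.2 ≠ q.1 ∧ p.2 ≠ q.2)
        = ((univ : Finset (Fin N)) \ {p.1, p.2}).offDiag := by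
      ext q
      simp only [mem_filter, Finset.mem_offDiag, Finset.mem_sdiff, Finset.mem_insert,
        Finset.mem_singleton, mem_univ, true_and]
      tauto
    rw [he, Finset.offDiag_card, Finset.card_sdiff_of_subset (Finset.subset_univ _),
      Finset.card_univ, Fintype.card_fin]
    have : ({p.1, p.2} : Finset (Fin N)).card = 2 := by
      rw [Finset.card_insert_of_notMem (by simpa using hp.2.2), Finset.card_singleton]
    rw [this]
  rw [Finset.sum_congr rfl hin, Finset.sum_const, smul_eq_mul,
    Finset.offDiag_card, Finset.card_univ, Fintype.card_fin]

lemma quad_count {N m : ℕ} (h : m ≤ N) {i j k l : Fin N} (h1 : i ≠ j) (h2 : k ≠ l)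
    (h3 : i ≠ k) (h4 : i ≠ l) (h5 : j ≠ k) (h6 : j ≠ l) :
    (N * N - N) * ((N - 2) * (N - 2) - (N - 2)) * (univ.filter fun π : Equiv.Perm (Fin N) =>
      (((π i : ℕ) < m ∧ (π j : ℕ) < m) ∧ (m ≤ (π k : ℕ) ∧ m ≤ (π l : ℕ)))).card
    = (m * m - m) * ((N - m) * (N - m) - (N - m)) * Fintype.card (Equiv.Perm (Fin N)) := by
  classical
  set P : (Fin N × Fin N) × (Fin N × Fin N) → Prop :=
    fun pq => pq.1.1 ≠ pq.2.1 ∧ pq.1.1 ≠ pq.2.2 ∧ pq.1.2 ≠ pq.2.1 ∧ pq.1.2 ≠ pq.2.2 with hP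
  set c := (univ.filter fun π : Equiv.Perm (Fin N) =>
      (((π i : ℕ) < m ∧ (π j : ℕ) < m) ∧ (m ≤ (π k : ℕ) ∧ m ≤ (π l : ℕ)))).card with hc
  have hconst : ∀ pq ∈ (((univ : Finset (Fin N)).offDiag ×ˢ
      (univ : Finset (Fin N)).offDiag).filter P),
      (univ.filter fun π : Equiv.Perm (Fin N) =>
        (((π pq.1.1 : ℕ) < m ∧ (π pq.1.2 : ℕ) < m)
          ∧ (m ≤ (π pq.2.1 : ℕ) ∧ m ≤ (π pq.2.2 : ℕ)))).card = c := by
    rintro ⟨⟨a, b⟩, ⟨u, v⟩⟩ hpq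
    simp only [mem_filter, Finset.mem_product, Finset.mem_offDiag, mem_univ, true_and,
      hP] at hpq
    obtain ⟨⟨hab, huv⟩, g1, g2, g3, g4⟩ := hpq
    have key := cnt_const
      (fun w : Fin 4 → ℕ => (w 0 < m ∧ w 1 < m) ∧ (m ≤ w 2 ∧ m ≤ w 3))
      (inj4 hab g1 g2 g3 g4 huv) (inj4 h1 h3 h4 h5 h6 h2)
    simp at key
    rw [hc]
    convert key <;> ext x <;>
      exact Finset.mem_filter.trans (Iff.trans (by simp) Finset.mem_filter.symm)
  have hzero : ∀ pq ∈ (((univ : Finset (Fin N)).offDiag ×ˢ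
      (univ : Finset (Fin N)).offDiag).filter fun pq => ¬ P pq),
      (univ.filter fun π : Equiv.Perm (Fin N) =>
        (((π pq.1.1 : ℕ) < m ∧ (π pq.1.2 : ℕ) < m)
          ∧ (m ≤ (π pq.2.1 : ℕ) ∧ m ≤ (π pq.2.2 : ℕ)))).card = 0 := by
    rintro ⟨⟨a, b⟩, ⟨u, v⟩⟩ hpq
    simp only [mem_filter, hP, not_and_or, not_not, not_ne_iff] at hpq
    exact quad_zero (by tauto)
  have hsplit : ∑ pq ∈ ((univ : Finset (Fin N)).offDiag ×ˢ
      (univ : Finset (Fin N)).offDiag),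
      (univ.filter fun π : Equiv.Perm (Fin N) =>
        (((π pq.1.1 : ℕ) < m ∧ (π pq.1.2 : ℕ) < m)
          ∧ (m ≤ (π pq.2.1 : ℕ) ∧ m ≤ (π pq.2.2 : ℕ)))).card
      = (N * N - N) * ((N - 2) * (N - 2) - (N - 2)) * c := by
    rw [← Finset.sum_filter_add_sum_filter_not _ P, Finset.sum_congr rfl hconst,
      Finset.sum_congr rfl hzero, Finset.sum_const, Finset.sum_const, smul_eq_mul,
      smul_eq_mul, mul_zero, add_zero, Dcard_eq]
  rw [← hsplit, swap_count, Finset.sum_congr rfl (fun π _ => perm_quad h π),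
    Finset.sum_const, smul_eq_mul, Finset.card_univ, mul_comm]

lemma sum_ite_ne3 {N : ℕ} (a b c : Fin N) (hab : a ≠ b) (hac : a ≠ c) (hbc : b ≠ c)
    (f : Fin N → ℝ) :
    ∑ l, (if l ≠ a ∧ l ≠ b ∧ l ≠ c then f l else 0)
    = (∑ l, f l) - f a - f b - f c := by
  rw [← Finset.sum_filter]
  have he : (univ.filter fun l : Fin N => l ≠ a ∧ l ≠ b ∧ l ≠ c)
      = univ \ {a, b, c} := by
    ext x; simp [Finset.mem_sdiff]
  rw [he]
  have h1 : ∑ x ∈ ({a, b, c} : Finset (Fin N)), f x = f a + f b + f c := by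
    rw [Finset.sum_insert (by simp [hab, hac]),
      Finset.sum_insert (by simpa using hbc), Finset.sum_singleton]
    ring
  have h2 := Finset.sum_sdiff (f := f) (Finset.subset_univ ({a, b, c} : Finset (Fin N)))
  linarith

lemma sum_ite_ne2 {N : ℕ} (a b : Fin N) (hab : a ≠ b) (f : Fin N → ℝ) :
    ∑ l, (if l ≠ a ∧ l ≠ b then f l else 0) = (∑ l, f l) - f a - f b := by
  rw [← Finset.sum_filter]
  have he : (univ.filter fun l : Fin N => l ≠ a ∧ l ≠ b) = univ \ {a, b} := by
    ext x; simp [Finset.mem_sdiff]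
  rw [he]
  have h1 : ∑ x ∈ ({a, b} : Finset (Fin N)), f x = f a + f b := by
    rw [Finset.sum_insert (by simpa using hab), Finset.sum_singleton]
  have h2 := Finset.sum_sdiff (f := f) (Finset.subset_univ ({a, b} : Finset (Fin N)))
  linarith

lemma S4_eq {N : ℕ} (W W' : Matrix (Fin N) (Fin N) ℝ)
    (hsym : W.IsSymm) (hdiag : ∀ i, W i i = 0)
    (hsym' : W'.IsSymm) (hdiag' : ∀ i, W' i i = 0) :
    ∑ i, ∑ j, (if i ≠ j then
      (∑ k, if k ≠ i ∧ k ≠ j then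
        (∑ l, if l ≠ k ∧ l ≠ i ∧ l ≠ j then W i j * W' k l else 0) else 0) else 0)
    = (∑ i, ∑ j, W i j) * (∑ i, ∑ j, W' i j)
      - 4 * (∑ i, ∑ j, ∑ r, W i j * W' i r)
      + 2 * (∑ i, ∑ j, W i j * W' i j) := by
  have inner2 : ∀ i j : Fin N, i ≠ j →
      (∑ k, if k ≠ i ∧ k ≠ j then
        (∑ l, if l ≠ k ∧ l ≠ i ∧ l ≠ j then W i j * W' k l else 0) else 0)
      = W i j * ((∑ a, ∑ b, W' a b) - 2 * (∑ b, W' i b) - 2 * (∑ b, W' j b)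
          + 2 * W' i j) := by
    intro i j hij
    have hkl : ∀ k : Fin N, (k ≠ i ∧ k ≠ j) →
        (∑ l, if l ≠ k ∧ l ≠ i ∧ l ≠ j then W i j * W' k l else 0)
        = W i j * ((∑ b, W' k b) - W' k i - W' k j) := by
      intro k hk
      rw [sum_ite_ne3 k i j hk.1 hk.2 hij (fun l => W i j * W' k l),
        ← Finset.mul_sum, hdiag' k]
      ring
    have step : (∑ k, if k ≠ i ∧ k ≠ j then
        (∑ l, if l ≠ k ∧ l ≠ i ∧ l ≠ j then W i j * W' k l else 0) else 0)
        = ∑ k, if k ≠ i ∧ k ≠ j then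
            W i j * ((∑ b, W' k b) - W' k i - W' k j) else 0 := by
      refine Finset.sum_congr rfl fun k _ => ?_
      by_cases h : k ≠ i ∧ k ≠ j
      · rw [if_pos h, if_pos h, hkl k h]
      · rw [if_neg h, if_neg h]
    rw [step, sum_ite_ne2 i j hij (fun k => W i j * ((∑ b, W' k b) - W' k i - W' k j))]
    have e1 : ∑ k, W i j * ((∑ b, W' k b) - W' k i - W' k j)
        = W i j * ((∑ a, ∑ b, W' a b) - (∑ b, W' i b) - (∑ b, W' j b)) := by
      rw [← Finset.mul_sum]
      congr 1
      have t2 : (∑ k, W' k i) = ∑ b, W' i b :=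
        Finset.sum_congr rfl fun k _ => hsym'.apply i k
      have t3 : (∑ k, W' k j) = ∑ b, W' j b :=
        Finset.sum_congr rfl fun k _ => hsym'.apply j k
      rw [Finset.sum_sub_distrib, Finset.sum_sub_distrib, t2, t3]
    rw [e1, hdiag' i, hdiag' j, hsym'.apply i j]
    ring
  have outer : ∑ i, ∑ j, (if i ≠ j then
      (∑ k, if k ≠ i ∧ k ≠ j then
        (∑ l, if l ≠ k ∧ l ≠ i ∧ l ≠ j then W i j * W' k l else 0) else 0) else 0)
      = ∑ i, ∑ j, W i j * ((∑ a, ∑ b, W' a b) - 2 * (∑ b, W' i b) - 2 * (∑ b, W' j b)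
          + 2 * W' i j) := by
    refine Finset.sum_congr rfl fun i _ => Finset.sum_congr rfl fun j _ => ?_
    by_cases h : i ≠ j
    · rw [if_pos h, inner2 i j h]
    · push_neg at h
      subst h
      rw [if_neg (by simp), hdiag i, zero_mul]
  rw [outer]
  have e2gen : ∀ M M' : Matrix (Fin N) (Fin N) ℝ,
      ∑ i, ∑ j, M i j * (2 * (∑ b, M' i b)) = 2 * ∑ i, ∑ j, ∑ r, M i j * M' i r := by
    intro M M'
    conv_rhs => rw [Finset.mul_sum]
    refine Finset.sum_congr rfl fun i _ => ?_
    conv_rhs => rw [Finset.mul_sum]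
    refine Finset.sum_congr rfl fun j _ => ?_
    conv_rhs => rw [← Finset.mul_sum (univ : Finset (Fin N)) (fun r => M' i r) (M i j)]
    ring
  have hsplit : ∑ i, ∑ j, W i j * ((∑ a, ∑ b, W' a b) - 2 * (∑ b, W' i b)
      - 2 * (∑ b, W' j b) + 2 * W' i j)
      = (∑ i, ∑ j, W i j * (∑ a, ∑ b, W' a b))
        - (∑ i, ∑ j, W i j * (2 * (∑ b, W' i b)))
        - (∑ i, ∑ j, W i j * (2 * (∑ b, W' j b)))
        + (∑ i, ∑ j, W i j * (2 * W' i j)) := by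
    simp only [mul_sub, mul_add, Finset.sum_sub_distrib, Finset.sum_add_distrib]
  rw [hsplit]
  have e1 : (∑ i, ∑ j, W i j * (∑ a, ∑ b, W' a b))
      = (∑ i, ∑ j, W i j) * (∑ i, ∑ j, W' i j) := by
    simp only [← Finset.sum_mul]
  have e2 : (∑ i, ∑ j, W i j * (2 * (∑ b, W' i b)))
      = 2 * (∑ i, ∑ j, ∑ r, W i j * W' i r) := e2gen W W'
  have e3 : (∑ i, ∑ j, W i j * (2 * (∑ b, W' j b)))
      = 2 * (∑ i, ∑ j, ∑ r, W i j * W' i r) := by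
    rw [Finset.sum_comm]
    have : ∀ j i : Fin N, W i j * (2 * (∑ b, W' j b)) = W j i * (2 * (∑ b, W' j b)) := by
      intro j i; rw [hsym.apply i j]
    simp only [this]
    exact e2gen W W'
  have e4 : (∑ i, ∑ j, W i j * (2 * W' i j)) = 2 * (∑ i, ∑ j, W i j * W' i j) := by
    rw [Finset.mul_sum]
    refine Finset.sum_congr rfl fun i _ => ?_
    rw [Finset.mul_sum]
    refine Finset.sum_congr rfl fun j _ => ?_
    ring
  rw [e1, e2, e3, e4]
  ring

lemma pCov_eq {N : ℕ} (f g : Equiv.Perm (Fin N) → ℝ) :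
    pCov f g = pE (fun π => f π * g π) - pE f * pE g := by
  have hc : (0:ℝ) < (Fintype.card (Equiv.Perm (Fin N)) : ℝ) := by
    exact_mod_cast Fintype.card_pos
  unfold pCov pE
  simp only [sub_mul, mul_sub, Finset.sum_sub_distrib]
  rw [← Finset.sum_mul, ← Finset.mul_sum, Finset.sum_const, Finset.card_univ, nsmul_eq_mul]
  field_simp
  ring

set_option maxHeartbeats 2000000 in
theorem stmt_3 (m n N : ℕ) (hm : 2 ≤ m) (hn : 2 ≤ n) (hN : N = m + n)
    (W W' : Matrix (Fin N) (Fin N) ℝ)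
    (hsym : W.IsSymm) (hdiag : ∀ i, W i i = 0)
    (hsym' : W'.IsSymm) (hdiag' : ∀ i, W' i i = 0) :
    pCov (Ux W m) (Uy W' m) =
      (2 * (m : ℝ) * (n : ℝ) / ((N : ℝ) * ((N : ℝ) - 1) * ((N : ℝ) - 2) * ((N : ℝ) - 3)))
        * ((m : ℝ) - 1) * ((n : ℝ) - 1) *
        (((∑ i, ∑ j, W i j * W' i j)
            - (∑ i, ∑ j, W i j) * (∑ i, ∑ j, W' i j) / ((N : ℝ) * ((N : ℝ) - 1)))
          - 2 * ((∑ i, ∑ j, ∑ r, W i j * W' i r)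
            - (∑ i, ∑ j, W i j) * (∑ i, ∑ j, W' i j) / (N : ℝ))) := by
  classical
  have hmN : m ≤ N := by omega
  have hN4 : 4 ≤ N := by omega
  have hnm : N - m = n := by omega
  set cf : ℝ := (Fintype.card (Equiv.Perm (Fin N)) : ℝ) with hcf
  have hcard : (0:ℝ) < cf := by
    rw [hcf]; exact_mod_cast Fintype.card_pos
  have hNr : (4:ℝ) ≤ (N:ℝ) := by exact_mod_cast hN4
  set dN : ℝ := (N:ℝ)*(N:ℝ) - (N:ℝ) with hdNdef
  set dN2 : ℝ := ((N:ℝ)-2)*((N:ℝ)-2) - ((N:ℝ)-2) with hdN2def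
  set dm : ℝ := (m:ℝ)*(m:ℝ) - (m:ℝ) with hdmdef
  set dn : ℝ := (n:ℝ)*(n:ℝ) - (n:ℝ) with hdndef
  have hdN : dN ≠ 0 := ne_of_gt (by rw [hdNdef]; nlinarith)
  have hdN2 : dN2 ≠ 0 := ne_of_gt (by rw [hdN2def]; nlinarith)
  -- cast lemmas
  have castN : ((N*N - N : ℕ) : ℝ) = dN := by
    rw [Nat.cast_sub (Nat.le_mul_of_pos_left N (by omega))]; push_cast; rw [hdNdef]
  have castm : ((m*m - m : ℕ) : ℝ) = dm := by
    rw [Nat.cast_sub (Nat.le_mul_of_pos_left m (by omega))]; push_cast; rw [hdmdef]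
  have castn : ((n*n - n : ℕ) : ℝ) = dn := by
    rw [Nat.cast_sub (Nat.le_mul_of_pos_left n (by omega))]; push_cast; rw [hdndef]
  have castN2 : (((N-2)*(N-2) - (N-2) : ℕ) : ℝ) = dN2 := by
    rw [Nat.cast_sub (Nat.le_mul_of_pos_left (N-2) (by omega)), Nat.cast_mul,
      Nat.cast_sub (by omega : 2 ≤ N)]
    push_cast; rw [hdN2def]
  -- value of pair counts
  have hc2 : ∀ i j : Fin N, i ≠ j →
      (((univ.filter fun π : Equiv.Perm (Fin N) =>
        ((π i : ℕ) < m ∧ (π j : ℕ) < m)).card : ℕ) : ℝ) = dm * cf / dN := by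
    intro i j hij
    have hq := pair_count_lt hmN hij
    have hqR : dN * (((univ.filter fun π : Equiv.Perm (Fin N) =>
        ((π i : ℕ) < m ∧ (π j : ℕ) < m)).card : ℕ) : ℝ) = dm * cf := by
      rw [← castN, ← castm, hcf]
      exact_mod_cast hq
    field_simp
    linarith [hqR]
  have hc2' : ∀ i j : Fin N, i ≠ j →
      (((univ.filter fun π : Equiv.Perm (Fin N) =>
        (m ≤ (π i : ℕ) ∧ m ≤ (π j : ℕ))).card : ℕ) : ℝ) = dn * cf / dN := by
    intro i j hij
    have hq := pair_count_ge hmN hij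
    rw [hnm] at hq
    have hqR : dN * (((univ.filter fun π : Equiv.Perm (Fin N) =>
        (m ≤ (π i : ℕ) ∧ m ≤ (π j : ℕ))).card : ℕ) : ℝ) = dn * cf := by
      rw [← castN, ← castn, hcf]
      exact_mod_cast hq
    field_simp
    linarith [hqR]
  have hc4 : ∀ i j k l : Fin N, i ≠ j → k ≠ l → i ≠ k → i ≠ l → j ≠ k → j ≠ l →
      (((univ.filter fun π : Equiv.Perm (Fin N) =>
        (((π i : ℕ) < m ∧ (π j : ℕ) < m) ∧ (m ≤ (π k : ℕ) ∧ m ≤ (π l : ℕ)))).card : ℕ) : ℝ)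
      = dm * dn * cf / (dN * dN2) := by
    intro i j k l h1 h2 h3 h4 h5 h6
    have hq := quad_count hmN h1 h2 h3 h4 h5 h6
    rw [hnm] at hq
    have hqR : dN * dN2 * (((univ.filter fun π : Equiv.Perm (Fin N) =>
        (((π i : ℕ) < m ∧ (π j : ℕ) < m) ∧ (m ≤ (π k : ℕ) ∧ m ≤ (π l : ℕ)))).card : ℕ) : ℝ)
        = dm * dn * cf := by
      rw [← castN, ← castN2, ← castm, ← castn, hcf]
      exact_mod_cast hq
    have : dN * dN2 ≠ 0 := mul_ne_zero hdN hdN2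
    field_simp
    linarith [hqR]
  -- expectation of Ux
  have hsumUx : ∑ π : Equiv.Perm (Fin N), Ux W m π
      = ∑ i, ∑ j, (((univ.filter fun π : Equiv.Perm (Fin N) =>
        ((π i : ℕ) < m ∧ (π j : ℕ) < m)).card : ℕ) : ℝ) * W i j := by
    unfold Ux
    rw [Finset.sum_comm]
    refine Finset.sum_congr rfl fun i _ => ?_
    rw [Finset.sum_comm]
    refine Finset.sum_congr rfl fun j _ => ?_
    rw [Finset.sum_ite, Finset.sum_const, Finset.sum_const_zero, add_zero, nsmul_eq_mul]
  have hUxval : ∑ π : Equiv.Perm (Fin N), Ux W m π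
      = dm * cf / dN * (∑ i, ∑ j, W i j) := by
    rw [hsumUx, Finset.mul_sum]
    refine Finset.sum_congr rfl fun i _ => ?_
    rw [Finset.mul_sum]
    refine Finset.sum_congr rfl fun j _ => ?_
    by_cases hij : i = j
    · subst hij; rw [hdiag i]; ring
    · rw [hc2 i j hij]
  have hsumUy : ∑ π : Equiv.Perm (Fin N), Uy W' m π
      = ∑ i, ∑ j, (((univ.filter fun π : Equiv.Perm (Fin N) =>
        (m ≤ (π i : ℕ) ∧ m ≤ (π j : ℕ))).card : ℕ) : ℝ) * W' i j := by
    unfold Uy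
    rw [Finset.sum_comm]
    refine Finset.sum_congr rfl fun i _ => ?_
    rw [Finset.sum_comm]
    refine Finset.sum_congr rfl fun j _ => ?_
    rw [Finset.sum_ite, Finset.sum_const, Finset.sum_const_zero, add_zero, nsmul_eq_mul]
  have hUyval : ∑ π : Equiv.Perm (Fin N), Uy W' m π
      = dn * cf / dN * (∑ i, ∑ j, W' i j) := by
    rw [hsumUy, Finset.mul_sum]
    refine Finset.sum_congr rfl fun i _ => ?_
    rw [Finset.mul_sum]
    refine Finset.sum_congr rfl fun j _ => ?_
    by_cases hij : i = j
    · subst hij; rw [hdiag' i]; ring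
    · rw [hc2' i j hij]
  -- product expansion
  have hprod : ∀ π : Equiv.Perm (Fin N), Ux W m π * Uy W' m π
      = ∑ i, ∑ j, ∑ k, ∑ l,
        (if ((π i : ℕ) < m ∧ (π j : ℕ) < m) ∧ (m ≤ (π k : ℕ) ∧ m ≤ (π l : ℕ))
          then W i j * W' k l else 0) := by
    intro π
    unfold Ux Uy
    rw [Finset.sum_mul_sum]
    refine Finset.sum_congr rfl fun i _ => ?_
    have h1 : ∀ k : Fin N,
        (∑ j, if (π i : ℕ) < m ∧ (π j : ℕ) < m then W i j else 0)
          * (∑ l, if m ≤ (π k : ℕ) ∧ m ≤ (π l : ℕ) then W' k l else 0)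
        = ∑ j, ∑ l, (if ((π i : ℕ) < m ∧ (π j : ℕ) < m)
            ∧ (m ≤ (π k : ℕ) ∧ m ≤ (π l : ℕ)) then W i j * W' k l else 0) := by
      intro k
      rw [Finset.sum_mul_sum]
      refine Finset.sum_congr rfl fun j _ => Finset.sum_congr rfl fun l _ => ?_
      by_cases hA : (π i : ℕ) < m ∧ (π j : ℕ) < m <;>
        by_cases hB : m ≤ (π k : ℕ) ∧ m ≤ (π l : ℕ) <;> simp [hA, hB]
    rw [Finset.sum_congr rfl fun k _ => h1 k, Finset.sum_comm]
  have hsum4 : ∑ π : Equiv.Perm (Fin N), Ux W m π * Uy W' m π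
      = ∑ i, ∑ j, ∑ k, ∑ l,
        (((univ.filter fun π : Equiv.Perm (Fin N) =>
          (((π i : ℕ) < m ∧ (π j : ℕ) < m) ∧ (m ≤ (π k : ℕ) ∧ m ≤ (π l : ℕ)))).card : ℕ) : ℝ)
          * (W i j * W' k l) := by
    rw [Finset.sum_congr rfl fun π _ => hprod π, Finset.sum_comm]
    refine Finset.sum_congr rfl fun i _ => ?_
    rw [Finset.sum_comm]
    refine Finset.sum_congr rfl fun j _ => ?_
    rw [Finset.sum_comm]
    refine Finset.sum_congr rfl fun k _ => ?_
    rw [Finset.sum_comm]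
    refine Finset.sum_congr rfl fun l _ => ?_
    rw [Finset.sum_ite, Finset.sum_const, Finset.sum_const_zero, add_zero, nsmul_eq_mul]
  have hUxyval : ∑ π : Equiv.Perm (Fin N), Ux W m π * Uy W' m π
      = dm * dn * cf / (dN * dN2) * ∑ i, ∑ j, ∑ k, ∑ l,
          (if i ≠ j ∧ (k ≠ i ∧ k ≠ j) ∧ (l ≠ k ∧ l ≠ i ∧ l ≠ j)
            then W i j * W' k l else 0) := by
    rw [hsum4, Finset.mul_sum]
    refine Finset.sum_congr rfl fun i _ => ?_
    rw [Finset.mul_sum]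
    refine Finset.sum_congr rfl fun j _ => ?_
    rw [Finset.mul_sum]
    refine Finset.sum_congr rfl fun k _ => ?_
    rw [Finset.mul_sum]
    refine Finset.sum_congr rfl fun l _ => ?_
    by_cases h1 : i = j
    · subst h1; rw [hdiag i]; simp
    by_cases h2 : k = l
    · subst h2; rw [hdiag' k]; simp
    by_cases h3 : i = k
    · rw [quad_zero (Or.inl h3), if_neg (fun h => h.2.1.1 h3.symm)]; simp
    by_cases h4 : i = l
    · rw [quad_zero (Or.inr (Or.inl h4)), if_neg (fun h => h.2.2.2.1 h4.symm)]; simp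
    by_cases h5 : j = k
    · rw [quad_zero (Or.inr (Or.inr (Or.inl h5))), if_neg (fun h => h.2.1.2 h5.symm)]; simp
    by_cases h6 : j = l
    · rw [quad_zero (Or.inr (Or.inr (Or.inr h6))), if_neg (fun h => h.2.2.2.2 h6.symm)]; simp
    rw [hc4 i j k l h1 h2 h3 h4 h5 h6,
      if_pos ⟨h1, ⟨fun e => h3 e.symm, fun e => h5 e.symm⟩,
        ⟨fun e => h2 e.symm, fun e => h4 e.symm, fun e => h6 e.symm⟩⟩]
  -- flat to peeled conversion
  have hflat : (∑ i, ∑ j, ∑ k, ∑ l,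
        (if i ≠ j ∧ (k ≠ i ∧ k ≠ j) ∧ (l ≠ k ∧ l ≠ i ∧ l ≠ j)
          then W i j * W' k l else 0))
      = ∑ i, ∑ j, (if i ≠ j then
          (∑ k, if k ≠ i ∧ k ≠ j then
            (∑ l, if l ≠ k ∧ l ≠ i ∧ l ≠ j then W i j * W' k l else 0) else 0) else 0) := by
    refine Finset.sum_congr rfl fun i _ => Finset.sum_congr rfl fun j _ => ?_
    by_cases hA : i ≠ j
    · rw [if_pos hA]
      refine Finset.sum_congr rfl fun k _ => ?_
      by_cases hB : k ≠ i ∧ k ≠ j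
      · rw [if_pos hB]
        refine Finset.sum_congr rfl fun l _ => ?_
        by_cases hC : l ≠ k ∧ l ≠ i ∧ l ≠ j <;> simp [hA, hB, hC]
      · rw [if_neg hB]
        exact Finset.sum_eq_zero fun l _ => if_neg (fun h => hB h.2.1)
    · rw [if_neg hA]
      exact Finset.sum_eq_zero fun k _ =>
        Finset.sum_eq_zero fun l _ => if_neg (fun h => hA h.1)
  -- assemble
  rw [pCov_eq]
  have hpEx : pE (Ux W m) = dm / dN * (∑ i, ∑ j, W i j) := by
    unfold pE
    rw [← hcf, hUxval]
    field_simp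
  have hpEy : pE (Uy W' m) = dn / dN * (∑ i, ∑ j, W' i j) := by
    unfold pE
    rw [← hcf, hUyval]
    field_simp
  have hpExy : pE (fun π => Ux W m π * Uy W' m π)
      = dm * dn / (dN * dN2) * ((∑ i, ∑ j, W i j) * (∑ i, ∑ j, W' i j)
          - 4 * (∑ i, ∑ j, ∑ r, W i j * W' i r)
          + 2 * (∑ i, ∑ j, W i j * W' i j)) := by
    unfold pE
    rw [← hcf, hUxyval, hflat, S4_eq W W' hsym hdiag hsym' hdiag']
    field_simp
  rw [hpEx, hpEy, hpExy]
  have hN0 : (N:ℝ) ≠ 0 := ne_of_gt (by linarith)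
  have hN1 : (N:ℝ) - 1 ≠ 0 := ne_of_gt (by linarith)
  have hN2' : (N:ℝ) - 2 ≠ 0 := ne_of_gt (by linarith)
  have hN3 : (N:ℝ) - 3 ≠ 0 := ne_of_gt (by linarith)
  rw [hdNdef, hdN2def, hdmdef, hdndef]
  have key : ∀ SA SB T3 T2 : ℝ,
      ((m:ℝ)*(m:ℝ) - (m:ℝ)) * ((n:ℝ)*(n:ℝ) - (n:ℝ))
          / (((N:ℝ)*(N:ℝ) - (N:ℝ)) * ((((N:ℝ)-2))*(((N:ℝ)-2)) - (((N:ℝ)-2))))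
          * (SA * SB - 4 * T3 + 2 * T2)
        - ((m:ℝ)*(m:ℝ) - (m:ℝ)) / ((N:ℝ)*(N:ℝ) - (N:ℝ)) * SA
          * (((n:ℝ)*(n:ℝ) - (n:ℝ)) / ((N:ℝ)*(N:ℝ) - (N:ℝ)) * SB)
      = (2 * (m : ℝ) * (n : ℝ) / ((N : ℝ) * ((N : ℝ) - 1) * ((N : ℝ) - 2) * ((N : ℝ) - 3)))
          * ((m : ℝ) - 1) * ((n : ℝ) - 1) *
          ((T2 - SA * SB / ((N : ℝ) * ((N : ℝ) - 1)))
            - 2 * (T3 - SA * SB / (N : ℝ))) := by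
    intro SA SB T3 T2
    have e1 : (N:ℝ)*(N:ℝ) - (N:ℝ) = (N:ℝ) * ((N:ℝ) - 1) := by ring
    have e2 : (((N:ℝ)-2))*(((N:ℝ)-2)) - (((N:ℝ)-2)) = ((N:ℝ) - 2) * ((N:ℝ) - 3) := by
      ring
    rw [e1, e2]
    field_simp
    ring
  exact key _ _ _ _
end

section
/- Let W, W' be symmetric N×N real matrices with zero diagonal, N = m+n, and define under the permutation null U_w = ((n−1)U_x + (m−1)U_y)/(N−2) and U_diff = U_x − U_y (similarly U'_w, U'_diff from W'). Then Cov(U_w − E U_w, U'_diff − E U'_diff) = 0; i.e., the 'weighted sum' and 'difference' components are uncorrelated under the permutation distribution. -/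
open Finset

section
variable {N : ℕ}

lemma card_ne : (Fintype.card (Equiv.Perm (Fin N)) : ℝ) ≠ 0 := by
  exact_mod_cast Fintype.card_ne_zero

noncomputable def Zf (m : ℕ) (i : Fin N) (π : Equiv.Perm (Fin N)) : ℝ :=
  if (π i : ℕ) < m then 1 else 0

lemma Zf_01 (m : ℕ) (i : Fin N) (π : Equiv.Perm (Fin N)) : Zf m i π = 0 ∨ Zf m i π = 1 := by
  unfold Zf; split <;> simp

lemma Zf_mul (m : ℕ) (i : Fin N) (π σ : Equiv.Perm (Fin N)) :
    Zf m i (π * σ) = Zf m (σ i) π := by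
  rfl

lemma relabel (σ : Equiv.Perm (Fin N)) (F : Equiv.Perm (Fin N) → ℝ) :
    ∑ π : Equiv.Perm (Fin N), F (π * σ) = ∑ π : Equiv.Perm (Fin N), F π :=
  Equiv.sum_comp (Equiv.mulRight σ) F

lemma sum_Zf {m : ℕ} (hmN : m ≤ N) (π : Equiv.Perm (Fin N)) :
    ∑ i, Zf m i π = (m : ℝ) := by
  have h1 : ∑ i, Zf m i π = ∑ a : Fin N, (if (a : ℕ) < m then (1:ℝ) else 0) :=
    Equiv.sum_comp π (fun a : Fin N => if (a : ℕ) < m then (1:ℝ) else 0)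
  rw [h1, Fin.sum_univ_eq_sum_range (fun a => if a < m then (1:ℝ) else 0) N,
    Finset.sum_boole]
  have : Finset.filter (fun a => a < m) (Finset.range N) = Finset.range m := by
    ext x; simp; omega
  rw [this, Finset.card_range]

lemma sum_Zf_perm {m : ℕ} (hmN : m ≤ N) (i : Fin N) :
    (N : ℝ) * ∑ π : Equiv.Perm (Fin N), Zf m i π
      = (Fintype.card (Equiv.Perm (Fin N)) : ℝ) * m := by
  have hsame : ∀ i' : Fin N,
      (∑ π : Equiv.Perm (Fin N), Zf m i' π) = ∑ π : Equiv.Perm (Fin N), Zf m i π := by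
    intro i'
    calc ∑ π : Equiv.Perm (Fin N), Zf m i' π
        = ∑ π : Equiv.Perm (Fin N), Zf m i (π * Equiv.swap i i') := by
          refine Finset.sum_congr rfl fun π _ => ?_
          rw [Zf_mul, Equiv.swap_apply_left]
      _ = ∑ π : Equiv.Perm (Fin N), Zf m i π := relabel _ _
  calc (N:ℝ) * ∑ π : Equiv.Perm (Fin N), Zf m i π
      = ∑ i' : Fin N, ∑ π : Equiv.Perm (Fin N), Zf m i' π := by
        rw [Finset.sum_congr rfl fun i' _ => hsame i', Finset.sum_const, card_univ,
          Fintype.card_fin, nsmul_eq_mul]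
    _ = ∑ π : Equiv.Perm (Fin N), ∑ i' : Fin N, Zf m i' π := Finset.sum_comm
    _ = ∑ _π : Equiv.Perm (Fin N), (m:ℝ) := Finset.sum_congr rfl fun π _ => sum_Zf hmN π
    _ = _ := by rw [Finset.sum_const, card_univ, nsmul_eq_mul]

lemma pE_Zf {m : ℕ} (hmN : m ≤ N) (i : Fin N) :
    pE (fun π => Zf m i π) = (m : ℝ) / N := by
  have hN0 : (N:ℝ) ≠ 0 := Nat.cast_ne_zero.2 (Fin.pos i).ne'
  have h := sum_Zf_perm hmN i
  unfold pE
  rw [div_eq_div_iff card_ne hN0]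
  linear_combination h

lemma sum_ZZ_perm {m : ℕ} (hmN : m ≤ N) {i j : Fin N} (hij : i ≠ j) :
    ((N : ℝ) - 1) * ∑ π : Equiv.Perm (Fin N), Zf m i π * Zf m j π
      = ((m : ℝ) - 1) * ∑ π : Equiv.Perm (Fin N), Zf m i π := by
  have hsame : ∀ j' ∈ Finset.univ.erase i,
      (∑ π : Equiv.Perm (Fin N), Zf m i π * Zf m j' π)
        = ∑ π : Equiv.Perm (Fin N), Zf m i π * Zf m j π := by
    intro j' hj'
    have hij' : i ≠ j' := (Finset.ne_of_mem_erase hj').symm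
    calc ∑ π : Equiv.Perm (Fin N), Zf m i π * Zf m j' π
        = ∑ π : Equiv.Perm (Fin N),
            Zf m i (π * Equiv.swap j j') * Zf m j (π * Equiv.swap j j') := by
          refine Finset.sum_congr rfl fun π _ => ?_
          rw [Zf_mul, Zf_mul, Equiv.swap_apply_left,
            Equiv.swap_apply_of_ne_of_ne hij hij']
      _ = ∑ π : Equiv.Perm (Fin N), Zf m i π * Zf m j π :=
          relabel (Equiv.swap j j') (fun π => Zf m i π * Zf m j π)
  have hcard : (Finset.univ.erase i).card = N - 1 := by
    rw [Finset.card_erase_of_mem (Finset.mem_univ i), card_univ, Fintype.card_fin]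
  have hNpos : 1 ≤ N := Fin.pos i
  calc ((N:ℝ) - 1) * ∑ π : Equiv.Perm (Fin N), Zf m i π * Zf m j π
      = ∑ j' ∈ Finset.univ.erase i, ∑ π : Equiv.Perm (Fin N), Zf m i π * Zf m j' π := by
        rw [Finset.sum_congr rfl hsame, Finset.sum_const, hcard, nsmul_eq_mul]
        push_cast [hNpos]
        ring
    _ = ∑ π : Equiv.Perm (Fin N), ∑ j' ∈ Finset.univ.erase i, Zf m i π * Zf m j' π :=
        Finset.sum_comm
    _ = ∑ π : Equiv.Perm (Fin N), ((m:ℝ) - 1) * Zf m i π := by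
        refine Finset.sum_congr rfl fun π _ => ?_
        rw [← Finset.mul_sum, Finset.sum_erase_eq_sub (Finset.mem_univ i), sum_Zf hmN]
        rcases Zf_01 m i π with h | h <;> rw [h] <;> ring
    _ = _ := by rw [← Finset.mul_sum]

lemma pE_ZZ {m : ℕ} (hmN : m ≤ N) (hN2 : 2 ≤ N) {i j : Fin N} (hij : i ≠ j) :
    pE (fun π => Zf m i π * Zf m j π) = (m : ℝ) * ((m:ℝ) - 1) / ((N:ℝ) * ((N:ℝ) - 1)) := by
  have hN0 : (N:ℝ) ≠ 0 := by positivity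
  have hN1 : (N:ℝ) - 1 ≠ 0 := by
    have : (2:ℝ) ≤ (N:ℝ) := by exact_mod_cast hN2
    linarith
  have h1 := sum_ZZ_perm hmN hij
  have h2 := sum_Zf_perm hmN i
  unfold pE
  rw [div_eq_div_iff card_ne (mul_ne_zero hN0 hN1)]
  linear_combination (N:ℝ) * h1 + ((m:ℝ) - 1) * h2

lemma pE_const' (c : ℝ) : pE (fun _ : Equiv.Perm (Fin N) => c) = c := by
  unfold pE
  rw [Finset.sum_const, card_univ, nsmul_eq_mul]
  field_simp

lemma pE_add (f g : Equiv.Perm (Fin N) → ℝ) :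
    pE (fun π => f π + g π) = pE f + pE g := by
  unfold pE; rw [Finset.sum_add_distrib, add_div]

lemma pE_sub (f g : Equiv.Perm (Fin N) → ℝ) :
    pE (fun π => f π - g π) = pE f - pE g := by
  unfold pE; rw [Finset.sum_sub_distrib, sub_div]

lemma pE_smul (c : ℝ) (f : Equiv.Perm (Fin N) → ℝ) :
    pE (fun π => c * f π) = c * pE f := by
  unfold pE; rw [← Finset.mul_sum, mul_div_assoc]

lemma pE_congr {f g : Equiv.Perm (Fin N) → ℝ} (h : ∀ π, f π = g π) : pE f = pE g := by
  unfold pE; exact congrArg (· / _) (Finset.sum_congr rfl fun π _ => h π)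

noncomputable def phi (m n : ℕ) (i j : Fin N) (π : Equiv.Perm (Fin N)) : ℝ :=
  ((n:ℝ) - 1) * (Zf m i π * Zf m j π)
    + ((m:ℝ) - 1) * ((1 - Zf m i π) * (1 - Zf m j π))

lemma pE_phi {m n : ℕ} (hm : 2 ≤ m) (hn : 2 ≤ n) (hN : N = m + n)
    {i j : Fin N} (hij : i ≠ j) :
    pE (phi m n i j) = ((m:ℝ) - 1) * ((n:ℝ) - 1) / ((N:ℝ) - 1) := by
  have hmN : m ≤ N := by omega
  have hN2 : 2 ≤ N := by omega
  have h1 : pE (phi m n i j)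
      = ((n:ℝ) - 1) * pE (fun π => Zf m i π * Zf m j π)
        + (((m:ℝ) - 1) * pE (fun _ : Equiv.Perm (Fin N) => (1:ℝ))
          - ((m:ℝ) - 1) * pE (fun π => Zf m i π)
          - ((m:ℝ) - 1) * pE (fun π => Zf m j π)
          + ((m:ℝ) - 1) * pE (fun π => Zf m i π * Zf m j π)) := by
    rw [← pE_smul, ← pE_smul, ← pE_smul, ← pE_smul, ← pE_smul,
      ← pE_sub, ← pE_sub, ← pE_add, ← pE_add]
    exact pE_congr fun π => by unfold phi; ring
  rw [h1, pE_const', pE_Zf hmN i, pE_Zf hmN j, pE_ZZ hmN hN2 hij]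
  have hNr : (N:ℝ) = (m:ℝ) + n := by rw [hN]; push_cast; ring
  have hmr : (2:ℝ) ≤ (m:ℝ) := by exact_mod_cast hm
  have hnr : (2:ℝ) ≤ (n:ℝ) := by exact_mod_cast hn
  have h0 : (N:ℝ) ≠ 0 := by rw [hNr]; linarith
  have h01 : (N:ℝ) - 1 ≠ 0 := by rw [hNr]; linarith
  field_simp
  rw [hNr]
  ring

lemma phi_mul_Zi {m n : ℕ} (i j : Fin N) (π : Equiv.Perm (Fin N)) :
    phi m n i j π * Zf m i π = ((n:ℝ) - 1) * (Zf m i π * Zf m j π) := by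
  unfold phi
  rcases Zf_01 m i π with h | h <;> rw [h] <;> ring

lemma phi_mul_Zj {m n : ℕ} (i j : Fin N) (π : Equiv.Perm (Fin N)) :
    phi m n i j π * Zf m j π = ((n:ℝ) - 1) * (Zf m i π * Zf m j π) := by
  unfold phi
  rcases Zf_01 m j π with h | h <;> rw [h] <;> ring

lemma pE_phi_Z {m n : ℕ} (hm : 2 ≤ m) (hn : 2 ≤ n) (hN : N = m + n)
    {i j : Fin N} (hij : i ≠ j) (k : Fin N) :
    pE (fun π => phi m n i j π * Zf m k π)
      = (m:ℝ) * ((m:ℝ) - 1) * ((n:ℝ) - 1) / ((N:ℝ) * ((N:ℝ) - 1)) := by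
  have hmN : m ≤ N := by omega
  have hN2 : 2 ≤ N := by omega
  have hZZ := pE_ZZ hmN hN2 hij
  have hNr : (N:ℝ) = (m:ℝ) + n := by rw [hN]; push_cast; ring
  have hmr : (2:ℝ) ≤ (m:ℝ) := by exact_mod_cast hm
  have hnr : (2:ℝ) ≤ (n:ℝ) := by exact_mod_cast hn
  have h0 : (N:ℝ) ≠ 0 := by rw [hNr]; linarith
  have h01 : (N:ℝ) - 1 ≠ 0 := by rw [hNr]; linarith
  have h02 : (N:ℝ) - 2 ≠ 0 := by rw [hNr]; linarith
  by_cases hki : k = i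
  · subst hki
    have h' : pE (fun π => phi m n k j π * Zf m k π)
        = ((n:ℝ) - 1) * pE (fun π => Zf m k π * Zf m j π) := by
      rw [← pE_smul]; exact pE_congr fun π => phi_mul_Zi k j π
    rw [h', hZZ]; ring
  by_cases hkj : k = j
  · subst hkj
    have h' : pE (fun π => phi m n i k π * Zf m k π)
        = ((n:ℝ) - 1) * pE (fun π => Zf m i π * Zf m k π) := by
      rw [← pE_smul]; exact pE_congr fun π => phi_mul_Zj i k π
    rw [h', hZZ]; ring
  -- k distinct from i and j
  set E : Finset (Fin N) := (Finset.univ.erase i).erase j with hE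
  have hkE : k ∈ E := by
    simp [hE, Finset.mem_erase, hkj, hki]
  have hcardE : E.card = N - 2 := by
    rw [hE, Finset.card_erase_of_mem, Finset.card_erase_of_mem (Finset.mem_univ i),
      card_univ, Fintype.card_fin]
    · omega
    · exact Finset.mem_erase.2 ⟨Ne.symm hij, Finset.mem_univ j⟩
  have hsame : ∀ k' ∈ E,
      (∑ π : Equiv.Perm (Fin N), phi m n i j π * Zf m k' π)
        = ∑ π : Equiv.Perm (Fin N), phi m n i j π * Zf m k π := by
    intro k' hk'
    have hk'i : k' ≠ i := Finset.ne_of_mem_erase (Finset.mem_of_mem_erase hk')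
    have hk'j : k' ≠ j := Finset.ne_of_mem_erase hk'
    calc ∑ π : Equiv.Perm (Fin N), phi m n i j π * Zf m k' π
        = ∑ π : Equiv.Perm (Fin N),
            phi m n i j (π * Equiv.swap k k') * Zf m k (π * Equiv.swap k k') := by
          refine Finset.sum_congr rfl fun π _ => ?_
          unfold phi
          rw [Zf_mul, Zf_mul, Zf_mul, Equiv.swap_apply_left,
            Equiv.swap_apply_of_ne_of_ne (Ne.symm hki) (Ne.symm hk'i),
            Equiv.swap_apply_of_ne_of_ne (Ne.symm hkj) (Ne.symm hk'j)]
      _ = ∑ π : Equiv.Perm (Fin N), phi m n i j π * Zf m k π :=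
          relabel (Equiv.swap k k') (fun π => phi m n i j π * Zf m k π)
  have hjE : j ∈ Finset.univ.erase i := Finset.mem_erase.2 ⟨Ne.symm hij, Finset.mem_univ j⟩
  have hA : ((N:ℝ) - 2) * (∑ π : Equiv.Perm (Fin N), phi m n i j π * Zf m k π)
      = (m:ℝ) * (∑ π : Equiv.Perm (Fin N), phi m n i j π)
        - 2 * ((n:ℝ) - 1) * (∑ π : Equiv.Perm (Fin N), Zf m i π * Zf m j π) := by
    have hN2' : ((N - 2 : ℕ) : ℝ) = (N:ℝ) - 2 := by
      have : 2 ≤ N := hN2; push_cast [this]; ring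
    calc ((N:ℝ) - 2) * (∑ π : Equiv.Perm (Fin N), phi m n i j π * Zf m k π)
        = ∑ k' ∈ E, ∑ π : Equiv.Perm (Fin N), phi m n i j π * Zf m k' π := by
          rw [Finset.sum_congr rfl hsame, Finset.sum_const, hcardE, nsmul_eq_mul, hN2']
      _ = ∑ π : Equiv.Perm (Fin N), ∑ k' ∈ E, phi m n i j π * Zf m k' π := Finset.sum_comm
      _ = ∑ π : Equiv.Perm (Fin N),
            ((m:ℝ) * phi m n i j π
              - phi m n i j π * Zf m i π - phi m n i j π * Zf m j π) := by
          refine Finset.sum_congr rfl fun π _ => ?_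
          rw [← Finset.mul_sum, hE, Finset.sum_erase_eq_sub hjE,
            Finset.sum_erase_eq_sub (Finset.mem_univ i), sum_Zf hmN]
          ring
      _ = (m:ℝ) * (∑ π : Equiv.Perm (Fin N), phi m n i j π)
          - 2 * ((n:ℝ) - 1) * (∑ π : Equiv.Perm (Fin N), Zf m i π * Zf m j π) := by
          rw [Finset.sum_sub_distrib, Finset.sum_sub_distrib, ← Finset.mul_sum]
          have hi' : ∑ π : Equiv.Perm (Fin N), phi m n i j π * Zf m i π
              = ((n:ℝ) - 1) * ∑ π : Equiv.Perm (Fin N), Zf m i π * Zf m j π := by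
            rw [Finset.mul_sum]
            exact Finset.sum_congr rfl fun π _ => phi_mul_Zi i j π
          have hj' : ∑ π : Equiv.Perm (Fin N), phi m n i j π * Zf m j π
              = ((n:ℝ) - 1) * ∑ π : Equiv.Perm (Fin N), Zf m i π * Zf m j π := by
            rw [Finset.mul_sum]
            exact Finset.sum_congr rfl fun π _ => phi_mul_Zj i j π
          rw [hi', hj']
          ring
  have hSphi : (∑ π : Equiv.Perm (Fin N), phi m n i j π)
      = ((m:ℝ) - 1) * ((n:ℝ) - 1) / ((N:ℝ) - 1) * (Fintype.card (Equiv.Perm (Fin N)) : ℝ) := by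
    have h := pE_phi hm hn hN hij
    unfold pE at h
    exact (div_eq_iff card_ne).1 h
  have hSZZ : (∑ π : Equiv.Perm (Fin N), Zf m i π * Zf m j π)
      = (m:ℝ) * ((m:ℝ) - 1) / ((N:ℝ) * ((N:ℝ) - 1)) * (Fintype.card (Equiv.Perm (Fin N)) : ℝ) := by
    unfold pE at hZZ
    exact (div_eq_iff card_ne).1 hZZ
  have hAval : (∑ π : Equiv.Perm (Fin N), phi m n i j π * Zf m k π)
      = (m:ℝ) * ((m:ℝ) - 1) * ((n:ℝ) - 1) / ((N:ℝ) * ((N:ℝ) - 1))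
        * (Fintype.card (Equiv.Perm (Fin N)) : ℝ) := by
    apply mul_left_cancel₀ h02
    rw [hA, hSphi, hSZZ]
    field_simp
  unfold pE
  rw [hAval, mul_div_assoc, div_self card_ne, mul_one]

lemma pE_div (c : ℝ) (f : Equiv.Perm (Fin N) → ℝ) :
    pE (fun π => f π / c) = pE f / c := by
  unfold pE; rw [← Finset.sum_div, div_div, div_div, mul_comm c]

lemma pE_sum {ι : Type*} (s : Finset ι) (F : ι → Equiv.Perm (Fin N) → ℝ) :
    pE (fun π => ∑ x ∈ s, F x π) = ∑ x ∈ s, pE (F x) := by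
  unfold pE; rw [Finset.sum_comm, Finset.sum_div]

lemma pE_sum2 {ι κ : Type*} (s : Finset ι) (t : Finset κ)
    (F : ι → κ → Equiv.Perm (Fin N) → ℝ) :
    pE (fun π => ∑ i ∈ s, ∑ j ∈ t, F i j π) = ∑ i ∈ s, ∑ j ∈ t, pE (F i j) := by
  rw [pE_sum s (fun i π => ∑ j ∈ t, F i j π)]
  exact Finset.sum_congr rfl fun i _ => pE_sum t (F i)

lemma pCov_center (f g : Equiv.Perm (Fin N) → ℝ) :
    pCov (fun π => f π - pE f) (fun π => g π - pE g)
      = pE (fun π => f π * g π) - pE f * pE g := by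
  have hf : pE (fun π => f π - pE f) = 0 := by rw [pE_sub, pE_const', sub_self]
  have hg : pE (fun π => g π - pE g) = 0 := by rw [pE_sub, pE_const', sub_self]
  unfold pCov
  rw [hf, hg]
  have h : pE (fun π => (f π - pE f - 0) * (g π - pE g - 0))
      = pE (fun π => f π * g π - (pE f * g π + (pE g * f π - pE f * pE g))) :=
    pE_congr (fun π => by ring)
  rw [h, pE_sub, pE_add, pE_smul, pE_sub, pE_smul, pE_const']
  ring

lemma sum2_mul {ι κ : Type*} (s : Finset ι) (t : Finset κ) (f : ι → κ → ℝ) (a : ℝ) :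
    (∑ i ∈ s, ∑ j ∈ t, f i j * a) = (∑ i ∈ s, ∑ j ∈ t, f i j) * a := by
  rw [Finset.sum_mul]
  exact Finset.sum_congr rfl fun i _ => (Finset.sum_mul _ _ _).symm

lemma Ux_eq (m : ℕ) (V : Matrix (Fin N) (Fin N) ℝ) (π : Equiv.Perm (Fin N)) :
    Ux V m π = ∑ i, ∑ j, V i j * (Zf m i π * Zf m j π) := by
  unfold Ux
  refine Finset.sum_congr rfl fun i _ => Finset.sum_congr rfl fun j _ => ?_
  unfold Zf
  by_cases h1 : (π i : ℕ) < m <;> by_cases h2 : (π j : ℕ) < m <;> simp [h1, h2]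

lemma Uy_eq (m : ℕ) (V : Matrix (Fin N) (Fin N) ℝ) (π : Equiv.Perm (Fin N)) :
    Uy V m π = ∑ i, ∑ j, V i j * ((1 - Zf m i π) * (1 - Zf m j π)) := by
  unfold Uy
  refine Finset.sum_congr rfl fun i _ => Finset.sum_congr rfl fun j _ => ?_
  have hiff : (m ≤ (π i : ℕ) ∧ m ≤ (π j : ℕ)) ↔ (¬ (π i : ℕ) < m ∧ ¬ (π j : ℕ) < m) := by
    omega
  rw [if_congr hiff rfl rfl]
  unfold Zf
  by_cases h1 : (π i : ℕ) < m <;> by_cases h2 : (π j : ℕ) < m <;> simp [h1, h2]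

end

theorem stmt_4 (m n N : ℕ) (hm : 2 ≤ m) (hn : 2 ≤ n) (hN : N = m + n)
    (W W' : Matrix (Fin N) (Fin N) ℝ)
    (hsym : W.IsSymm) (hdiag : ∀ i, W i i = 0)
    (hsym' : W'.IsSymm) (hdiag' : ∀ i, W' i i = 0) :
    pCov
      (fun π => (((n : ℝ) - 1) * Ux W m π + ((m : ℝ) - 1) * Uy W m π) / ((N : ℝ) - 2)
        - pE (fun π' => (((n : ℝ) - 1) * Ux W m π' + ((m : ℝ) - 1) * Uy W m π') / ((N : ℝ) - 2)))
      (fun π => (Ux W' m π - Uy W' m π)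
        - pE (fun π' => Ux W' m π' - Uy W' m π')) = 0 := by
  have hmN : m ≤ N := by omega
  have hN2 : 2 ≤ N := by omega
  have hNr : (N : ℝ) = (m : ℝ) + n := by rw [hN]; push_cast; ring
  have hmr : (2 : ℝ) ≤ (m : ℝ) := by exact_mod_cast hm
  have hnr : (2 : ℝ) ≤ (n : ℝ) := by exact_mod_cast hn
  have h0 : (N : ℝ) ≠ 0 := by rw [hNr]; linarith
  have h01 : (N : ℝ) - 1 ≠ 0 := by rw [hNr]; linarith
  have h02 : (N : ℝ) - 2 ≠ 0 := by rw [hNr]; linarith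
  -- abbreviations
  set p : ℝ := ((m : ℝ) - 1) * ((n : ℝ) - 1) / ((N : ℝ) - 1) with hp
  set v : ℝ := (m : ℝ) * ((m : ℝ) - 1) * ((n : ℝ) - 1) / ((N : ℝ) * ((N : ℝ) - 1)) with hv
  set c : ℝ := (m : ℝ) / N + (m : ℝ) / N - 1 with hc
  -- pointwise decompositions
  have hf0 : ∀ π : Equiv.Perm (Fin N),
      ((n : ℝ) - 1) * Ux W m π + ((m : ℝ) - 1) * Uy W m π
        = ∑ i, ∑ j, W i j * phi m n i j π := by
    intro π
    rw [Ux_eq m W π, Uy_eq m W π, Finset.mul_sum, Finset.mul_sum, ← Finset.sum_add_distrib]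
    refine Finset.sum_congr rfl fun i _ => ?_
    rw [Finset.mul_sum, Finset.mul_sum, ← Finset.sum_add_distrib]
    refine Finset.sum_congr rfl fun j _ => ?_
    unfold phi; ring
  have hg0 : ∀ π : Equiv.Perm (Fin N),
      Ux W' m π - Uy W' m π
        = ∑ k, ∑ l, W' k l * (Zf m k π + Zf m l π - 1) := by
    intro π
    rw [Ux_eq m W' π, Uy_eq m W' π, ← Finset.sum_sub_distrib]
    refine Finset.sum_congr rfl fun k _ => ?_
    rw [← Finset.sum_sub_distrib]
    refine Finset.sum_congr rfl fun l _ => ?_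
    ring
  -- expectation of the difference statistic
  have hpEg0 : pE (fun π => Ux W' m π - Uy W' m π) = (∑ k, ∑ l, W' k l) * c := by
    rw [pE_congr hg0, pE_sum2, ← sum2_mul Finset.univ Finset.univ (fun k l => W' k l) c]
    refine Finset.sum_congr rfl fun k _ => ?_
    refine Finset.sum_congr rfl fun l _ => ?_
    rw [pE_smul]
    congr 1
    rw [show (fun π => Zf m k π + Zf m l π - 1)
        = (fun π : Equiv.Perm (Fin N) => (Zf m k π + Zf m l π) - (1 : ℝ)) from rfl,
      pE_sub, pE_add, pE_const', pE_Zf hmN k, pE_Zf hmN l, hc]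
  -- expectation of the weighted statistic
  have hpEf0 : pE (fun π => ((n : ℝ) - 1) * Ux W m π + ((m : ℝ) - 1) * Uy W m π)
      = (∑ i, ∑ j, W i j) * p := by
    rw [pE_congr hf0, pE_sum2, ← sum2_mul Finset.univ Finset.univ (fun i j => W i j) p]
    refine Finset.sum_congr rfl fun i _ => ?_
    refine Finset.sum_congr rfl fun j _ => ?_
    by_cases hij : i = j
    · subst hij
      rw [hdiag i]
      simp only [zero_mul]
      exact pE_const' 0
    · rw [pE_smul, pE_phi hm hn hN hij, hp]
  -- key decorrelation identity
  have hkey : ∀ i j : Fin N,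
      W i j * pE (fun π => phi m n i j π * (Ux W' m π - Uy W' m π))
        = W i j * (p * ((∑ k, ∑ l, W' k l) * c)) := by
    intro i j
    by_cases hij : i = j
    · subst hij; rw [hdiag i]; ring
    · congr 1
      have h1 : pE (fun π => phi m n i j π * (Ux W' m π - Uy W' m π))
          = ∑ k, ∑ l, pE (fun π =>
              W' k l * (phi m n i j π * Zf m k π + phi m n i j π * Zf m l π
                - phi m n i j π)) := by
        rw [← pE_sum2]
        refine pE_congr fun π => ?_
        rw [hg0 π, Finset.mul_sum]
        refine Finset.sum_congr rfl fun k _ => ?_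
        rw [Finset.mul_sum]
        refine Finset.sum_congr rfl fun l _ => ?_
        ring
      rw [h1]
      have h2 : ∀ k l : Fin N,
          pE (fun π => W' k l * (phi m n i j π * Zf m k π + phi m n i j π * Zf m l π
              - phi m n i j π)) = W' k l * (v + v - p) := by
        intro k l
        rw [pE_smul]
        congr 1
        rw [show (fun π => phi m n i j π * Zf m k π + phi m n i j π * Zf m l π
              - phi m n i j π)
            = (fun π : Equiv.Perm (Fin N) =>
              (phi m n i j π * Zf m k π + phi m n i j π * Zf m l π)
                - phi m n i j π) from rfl,
          pE_sub, pE_add, pE_phi_Z hm hn hN hij k, pE_phi_Z hm hn hN hij l,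
          pE_phi hm hn hN hij, hp, hv]
      calc (∑ k, ∑ l, pE (fun π =>
              W' k l * (phi m n i j π * Zf m k π + phi m n i j π * Zf m l π
                - phi m n i j π)))
          = ∑ k, ∑ l, W' k l * (v + v - p) := by
            exact Finset.sum_congr rfl fun k _ =>
              Finset.sum_congr rfl fun l _ => h2 k l
        _ = (∑ k, ∑ l, W' k l) * (v + v - p) :=
            sum2_mul Finset.univ Finset.univ (fun k l => W' k l) (v + v - p)
        _ = p * ((∑ k, ∑ l, W' k l) * c) := by
            have : v + v - p = p * c := by
              rw [hp, hv, hc]; field_simp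
            rw [this]; ring
  -- product expectation factorizes
  have hprod : pE (fun π => (((n : ℝ) - 1) * Ux W m π + ((m : ℝ) - 1) * Uy W m π)
        * (Ux W' m π - Uy W' m π))
      = ((∑ i, ∑ j, W i j) * p) * ((∑ k, ∑ l, W' k l) * c) := by
    have h1 : pE (fun π => (((n : ℝ) - 1) * Ux W m π + ((m : ℝ) - 1) * Uy W m π)
          * (Ux W' m π - Uy W' m π))
        = ∑ i, ∑ j, pE (fun π =>
            W i j * (phi m n i j π * (Ux W' m π - Uy W' m π))) := by
      rw [← pE_sum2]
      refine pE_congr fun π => ?_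
      rw [hf0 π, Finset.sum_mul]
      refine Finset.sum_congr rfl fun i _ => ?_
      rw [Finset.sum_mul]
      refine Finset.sum_congr rfl fun j _ => ?_
      ring
    rw [h1]
    calc (∑ i, ∑ j, pE (fun π => W i j * (phi m n i j π * (Ux W' m π - Uy W' m π))))
        = ∑ i, ∑ j, W i j * (p * ((∑ k, ∑ l, W' k l) * c)) := by
          refine Finset.sum_congr rfl fun i _ => Finset.sum_congr rfl fun j _ => ?_
          rw [pE_smul]
          exact hkey i j
      _ = (∑ i, ∑ j, W i j) * (p * ((∑ k, ∑ l, W' k l) * c)) :=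
          sum2_mul Finset.univ Finset.univ (fun i j => W i j) _
      _ = ((∑ i, ∑ j, W i j) * p) * ((∑ k, ∑ l, W' k l) * c) := by ring
  -- assemble
  rw [pCov_center
    (fun π => (((n : ℝ) - 1) * Ux W m π + ((m : ℝ) - 1) * Uy W m π) / ((N : ℝ) - 2))
    (fun π => Ux W' m π - Uy W' m π)]
  have e1 : pE (fun π =>
        ((((n : ℝ) - 1) * Ux W m π + ((m : ℝ) - 1) * Uy W m π) / ((N : ℝ) - 2))
          * (Ux W' m π - Uy W' m π))
      = pE (fun π => (((n : ℝ) - 1) * Ux W m π + ((m : ℝ) - 1) * Uy W m π)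
          * (Ux W' m π - Uy W' m π)) / ((N : ℝ) - 2) := by
    rw [← pE_div]
    exact pE_congr fun π => by ring
  have e2 : pE (fun π =>
        (((n : ℝ) - 1) * Ux W m π + ((m : ℝ) - 1) * Uy W m π) / ((N : ℝ) - 2))
      = pE (fun π => ((n : ℝ) - 1) * Ux W m π + ((m : ℝ) - 1) * Uy W m π)
          / ((N : ℝ) - 2) :=
    pE_div _ _
  rw [e1, e2, hprod, hpEf0, hpEg0]
  ring
end
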